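/- Suppose A ∈ ℝ^{m×q} has full column rank, δ > 0, and Â, δ̂ satisfy simultaneously Â = S Â (δ̂ I_q + Σ̂⁻¹ Âᵀ S Â)⁻¹ and δ̂ = (1/m)[tr(S) − tr(Â Σ̂⁻¹ Âᵀ S)], where Σ̂ = δ̂ I_q + Âᵀ Â and S is symmetric PSD. Then S Â = Â(δ̂ I_q + Âᵀ Â); i.e., every fixed point of the EM iteration satisfies the ML stationarity equation. -/

import Mathlib

open Matrix

theorem stmt19 {m q : ℕ} (S : Matrix (Fin m) (Fin m) ℝ) (hS : S.PosSemidef)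
    (Ahat : Matrix (Fin m) (Fin q) ℝ) (hrank : Ahat.rank = q)
    (δhat : ℝ) (hδ : 0 < δhat)
    (Sighat : Matrix (Fin q) (Fin q) ℝ)
    (hSig : Sighat = δhat • (1 : Matrix (Fin q) (Fin q) ℝ) + Ahatᵀ * Ahat)
    (hfix1 : Ahat = S * Ahat * (δhat • (1 : Matrix (Fin q) (Fin q) ℝ)
        + Sighat⁻¹ * (Ahatᵀ * S * Ahat))⁻¹)
    (hfix2 : δhat = (1 / (m : ℝ)) * (S.trace - (Ahat * Sighat⁻¹ * Ahatᵀ * S).trace)) :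
    S * Ahat = Ahat * (δhat • (1 : Matrix (Fin q) (Fin q) ℝ) + Ahatᵀ * Ahat) := by
  set B : Matrix (Fin q) (Fin q) ℝ := Ahatᵀ * S * Ahat with hB
  set M : Matrix (Fin q) (Fin q) ℝ :=
    δhat • (1 : Matrix (Fin q) (Fin q) ℝ) + Sighat⁻¹ * B with hMdef
  have hone : (δhat • (1 : Matrix (Fin q) (Fin q) ℝ)).PosDef := by
    rw [smul_one_eq_diagonal]
    exact posDef_diagonal_iff.mpr fun i => hδ
  have hAtA : (Ahatᵀ * Ahat).PosSemidef := by
    simpa using posSemidef_conjTranspose_mul_self Ahat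
  have hSigpd : Sighat.PosDef := by rw [hSig]; exact hone.add_posSemidef hAtA
  have hBpsd : B.PosSemidef := by
    have := hS.conjTranspose_mul_mul_same Ahat
    simpa [hB, Matrix.mul_assoc] using this
  have hNpd : (δhat • Sighat + B).PosDef := by
    refine Matrix.PosDef.add_posSemidef ⟨by simp [Matrix.IsHermitian, ← Matrix.conjTranspose_eq_transpose_of_trivial, hSigpd.1.eq], fun x hx => ?_⟩ hBpsd
    exact (hSigpd.smul hδ).2 hx
  have hSigM : Sighat * M = δhat • Sighat + B := by
    rw [hMdef, Matrix.mul_add, Matrix.mul_smul, Matrix.mul_one,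
      ← Matrix.mul_assoc, Matrix.mul_nonsing_inv _ hSigpd.det_pos.ne'.isUnit, Matrix.one_mul]
  have hMunit : IsUnit M.det := by
    have : Sighat.det * M.det = (δhat • Sighat + B).det := by
      rw [← det_mul, hSigM]
    exact isUnit_of_mul_isUnit_right (this ▸ hNpd.det_pos.ne'.isUnit)
  have hAM : Ahat * M = S * Ahat := by
    conv_lhs => rw [hfix1]
    rw [Matrix.mul_assoc, Matrix.nonsing_inv_mul _ hMunit, Matrix.mul_one]
  have h1 : Ahatᵀ * Ahat * M = B := by
    rw [Matrix.mul_assoc, hAM, hB, Matrix.mul_assoc]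
  have h2 : Ahatᵀ * Ahat * M = δhat • Sighat + B - δhat • M := by
    have : Ahatᵀ * Ahat = Sighat - δhat • (1 : Matrix (Fin q) (Fin q) ℝ) := by
      rw [hSig]; abel
    rw [this, Matrix.sub_mul, hSigM, Matrix.smul_mul, Matrix.one_mul]
  have hMSig : M = Sighat := by
    have h := h1.symm.trans h2
    rw [eq_sub_iff_add_eq] at h
    have h3 : δhat • M = δhat • Sighat := by
      calc δhat • M = B + δhat • M - B := by abel
        _ = δhat • Sighat + B - B := by rw [h]
        _ = δhat • Sighat := by abel
    exact smul_right_injective _ hδ.ne' h3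
  rw [← hAM, hMSig, hSig]
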